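/- Let I : 𝔻 → 𝔻 be an inner function and for α ∈ 𝕋 let σ_α be its Clark measure. Then the family {σ_α} disintegrates Lebesgue measure: for every continuous function g on 𝕋, one has ∫_𝕋 (∫_𝕋 g dσ_α) dm(α) = ∫_𝕋 g dm, where m is normalized Lebesgue measure on 𝕋. -/

import Mathlib

open MeasureTheory Complex Filter Real Set

noncomputable section

def unitDisk : Set ℂ := {z : ℂ | ‖z‖ < 1}

def unitCircle : Set ℂ := {z : ℂ | ‖z‖ = 1}

/-- Normalized Lebesgue (arclength) measure on the unit circle, realized as a measure on `ℂ`. -/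
def mCircle : Measure ℂ :=
  (ENNReal.ofReal (2 * π))⁻¹ •
    Measure.map (fun θ : ℝ => Complex.exp (θ * Complex.I))
      (volume.restrict (Set.Ioc 0 (2 * π)))

/-- `f` has radial limit `L` at the boundary point `ζ`. -/
def HasRadialLimit (f : ℂ → ℂ) (ζ L : ℂ) : Prop :=
  Filter.Tendsto (fun r : ℝ => f ((r : ℂ) * ζ)) (nhdsWithin 1 (Set.Iio 1)) (nhds L)

/-- `I` is an inner function on the unit disk with boundary-value function `Ib`. -/
def IsInner (I Ib : ℂ → ℂ) : Prop :=
  DifferentiableOn ℂ I unitDisk ∧ Set.MapsTo I unitDisk unitDisk ∧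
    ∀ᵐ ζ ∂mCircle, HasRadialLimit I ζ (Ib ζ) ∧ ‖Ib ζ‖ = 1

/-- Poisson integral of a (positive finite) measure on the circle. -/
def poissonIntegral (μ : Measure ℂ) (z : ℂ) : ℝ :=
  ∫ ζ, (1 - ‖z‖ ^ 2) / ‖ζ - z‖ ^ 2 ∂μ

/-- `σ` is the Clark measure of the inner function `I` at `α ∈ 𝕋`. -/
def IsClarkMeasure (I : ℂ → ℂ) (α : ℂ) (σ : Measure ℂ) : Prop :=
  IsFiniteMeasure σ ∧ σ unitCircleᶜ = 0 ∧
    ∀ z ∈ unitDisk, poissonIntegral σ z =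
      (1 - ‖I z‖ ^ 2) / ‖α - I z‖ ^ 2

lemma measurable_circleExp : Measurable (fun θ : ℝ => Complex.exp (θ * Complex.I)) := by
  fun_prop

lemma abs_circleExp (θ : ℝ) : ‖Complex.exp (θ * Complex.I)‖ = 1 :=
  Complex.norm_exp_ofReal_mul_I θ

lemma measurableSet_unitCircle : MeasurableSet unitCircle :=
  (isClosed_eq (continuous_norm) continuous_const).measurableSet

lemma mCircle_compl_circle : mCircle unitCircleᶜ = 0 := by
  rw [mCircle, Measure.smul_apply,
    Measure.map_apply measurable_circleExp measurableSet_unitCircle.compl]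
  have : (fun θ : ℝ => Complex.exp (θ * Complex.I)) ⁻¹' unitCircleᶜ = ∅ := by
    ext θ; simp [unitCircle, abs_circleExp]
  simp [this]

lemma mCircle_ae_circle : ∀ᵐ ζ ∂mCircle, ζ ∈ unitCircle := by
  exact ae_iff.2 mCircle_compl_circle

lemma mCircle_restrict : mCircle.restrict unitCircle = mCircle :=
  Measure.restrict_eq_self_of_ae_mem mCircle_ae_circle

instance : IsProbabilityMeasure mCircle := by
  constructor
  rw [mCircle, Measure.smul_apply,
    Measure.map_apply measurable_circleExp MeasurableSet.univ]
  simp only [Set.preimage_univ, Measure.restrict_apply MeasurableSet.univ, Set.univ_inter,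
    Real.volume_Ioc, smul_eq_mul]
  rw [sub_zero, ENNReal.inv_mul_cancel (by simp [Real.pi_pos]) (by simp [ENNReal.mul_eq_top])]

lemma aestronglyMeasurable_mCircle {E : Type*} [NormedAddCommGroup E] {f : ℂ → E}
    (hf : ContinuousOn f unitCircle) : AEStronglyMeasurable f mCircle := by
  rw [← mCircle_restrict]
  exact hf.aestronglyMeasurable measurableSet_unitCircle

lemma integral_mCircle {E : Type*} [NormedAddCommGroup E] [NormedSpace ℝ E] (f : ℂ → E)
    (hf : AEStronglyMeasurable f mCircle) :
    ∫ ζ, f ζ ∂mCircle = (2 * π)⁻¹ • ∫ θ in Set.Ioc 0 (2 * π), f (Complex.exp (θ * Complex.I)) := by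
  have hc : (ENNReal.ofReal (2 * π))⁻¹ ≠ 0 := by
    simp [ENNReal.inv_ne_zero, ENNReal.mul_eq_top]
  have hf' : AEStronglyMeasurable f
      (Measure.map (fun θ : ℝ => Complex.exp (θ * Complex.I))
        (volume.restrict (Set.Ioc 0 (2 * π)))) := by
    rw [mCircle] at hf
    obtain ⟨g, hg, hfg⟩ := hf
    exact ⟨g, hg, (Measure.ae_ennreal_smul_measure_iff hc).mp hfg⟩
  rw [mCircle, integral_smul_measure,
    integral_map measurable_circleExp.aemeasurable hf']
  congr 1
  rw [ENNReal.toReal_inv, ENNReal.toReal_ofReal Real.two_pi_pos.le]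

lemma re_quotient {z ζ : ℂ} (hζ : ‖ζ‖ = 1) (hz : ‖z‖ < 1) :
    ((ζ + z) / (ζ - z)).re = (1 - ‖z‖ ^ 2) / ‖ζ - z‖ ^ 2 := by
  have hd : ζ - z ≠ 0 := by
    intro h
    rw [sub_eq_zero] at h
    rw [← h, hζ] at hz
    exact lt_irrefl _ hz
  have hd' : (starRingEnd ℂ) (ζ - z) ≠ 0 := fun h => hd (by simpa using congrArg (starRingEnd ℂ) h)
  have hζ1 : ζ * (starRingEnd ℂ) ζ = 1 := by
    rw [Complex.mul_conj]
    norm_cast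
    rw [← Complex.sq_norm, hζ]; norm_num
  have ha : ((‖z‖ ^ 2 : ℝ) : ℂ) = z * (starRingEnd ℂ) z := by
    rw [Complex.sq_norm]; exact_mod_cast (Complex.mul_conj z).symm
  have hb : ((‖ζ - z‖ ^ 2 : ℝ) : ℂ) = (ζ - z) * (starRingEnd ℂ) (ζ - z) := by
    rw [Complex.sq_norm]; exact_mod_cast (Complex.mul_conj (ζ - z)).symm
  have hbne : ((‖ζ - z‖ ^ 2 : ℝ) : ℂ) ≠ 0 := by
    rw [hb]; exact mul_ne_zero hd hd'
  have key : (((ζ + z) / (ζ - z)).re : ℂ) = (((1 - ‖z‖ ^ 2) / ‖ζ - z‖ ^ 2 : ℝ) : ℂ) := by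
    have hre : ((((ζ + z) / (ζ - z)).re : ℝ) : ℂ) =
        ((ζ + z) / (ζ - z) + (starRingEnd ℂ) ((ζ + z) / (ζ - z))) / 2 := by
      rw [Complex.add_conj]; push_cast; ring
    rw [hre, map_div₀, map_add, map_sub, Complex.ofReal_div, Complex.ofReal_sub,
      Complex.ofReal_one, ha, hb]
    have hcd : (starRingEnd ℂ) ζ - (starRingEnd ℂ) z ≠ 0 := by rw [← map_sub]; exact hd'
    field_simp
    rw [map_sub]
    linear_combination (2*((starRingEnd ℂ) ζ - (starRingEnd ℂ) z)) * hζ1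
  exact_mod_cast key

lemma abs_circleExp' (θ : ℝ) : ‖Complex.exp (θ * Complex.I)‖ = 1 :=
  Complex.norm_exp_ofReal_mul_I θ

lemma complex_circle_integral {z : ℂ} (hz : ‖z‖ < 1) :
    ∫ θ in (0:ℝ)..(2*π), (Complex.exp (θ * Complex.I) + z) / (Complex.exp (θ * Complex.I) - z)
      = 2 * π := by
  have hzb : z ∈ Metric.ball (0:ℂ) 1 := by
    simpa using hz
  have hzs : z ∉ Metric.sphere (0:ℂ) |(1:ℝ)| := by
    simp only [abs_one, Metric.mem_sphere, Complex.dist_eq, sub_zero]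
    intro h; rw [h] at hz; exact lt_irrefl _ hz
  have h0s : (0:ℂ) ∉ Metric.sphere (0:ℂ) |(1:ℝ)| := by
    simp
  have ci1 : CircleIntegrable (fun w => (w - z)⁻¹) 0 1 :=
    circleIntegrable_sub_inv_iff.2 (Or.inr hzs)
  have ci2 : CircleIntegrable (fun w => (w - 0)⁻¹) 0 1 :=
    circleIntegrable_sub_inv_iff.2 (Or.inr h0s)
  have ci1' : CircleIntegrable (fun w => (2:ℂ) • (w - z)⁻¹) 0 1 := ci1.smul (2:ℂ)
  have e1 : (∮ w in C(0,1), (2:ℂ) • (w - z)⁻¹) = (2:ℂ) • (2 * π * Complex.I) := by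
    rw [circleIntegral.integral_smul]
    rw [circleIntegral.integral_sub_inv_of_mem_ball hzb]
  have e2 : (∮ w in C(0,1), (w - (0:ℂ))⁻¹) = 2 * π * Complex.I :=
    circleIntegral.integral_sub_inv_of_mem_ball (by simpa using Metric.mem_ball_self one_pos)
  have hcirc : (∮ w in C(0,1), ((2:ℂ) • (w - z)⁻¹ - (w - 0)⁻¹)) = 2 * π * Complex.I := by
    rw [circleIntegral.integral_sub ci1' ci2, e1, e2]
    simp only [smul_eq_mul]; ring
  have hne : ∀ θ : ℝ, Complex.exp (θ * Complex.I) - z ≠ 0 := by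
    intro θ h
    rw [sub_eq_zero] at h
    rw [← h, abs_circleExp'] at hz
    exact lt_irrefl _ hz
  have hunfold : (∮ w in C(0,1), ((2:ℂ) • (w - z)⁻¹ - (w - 0)⁻¹)) =
      ∫ θ in (0:ℝ)..(2*π), Complex.I * ((Complex.exp (θ * Complex.I) + z) /
        (Complex.exp (θ * Complex.I) - z)) := by
    rw [circleIntegral]
    apply intervalIntegral.integral_congr
    intro θ _
    have hcm : circleMap 0 1 θ = Complex.exp (θ * Complex.I) := by
      simp [circleMap]
    have he : Complex.exp (θ * Complex.I) ≠ 0 := Complex.exp_ne_zero _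
    have hez := hne θ
    simp only [deriv_circleMap, hcm, smul_eq_mul, sub_zero]
    field_simp
    ring
  rw [hunfold, intervalIntegral.integral_const_mul] at hcirc
  have : Complex.I * (2 * π) = 2 * π * Complex.I := by ring
  rw [← this] at hcirc
  exact mul_left_cancel₀ Complex.I_ne_zero hcirc
lemma kernel_integral_one {z : ℂ} (hz : ‖z‖ < 1) :
    ∫ ζ, (1 - ‖z‖ ^ 2) / ‖ζ - z‖ ^ 2 ∂mCircle = 1 := by
  have hne : ∀ ζ : ℂ, ‖ζ‖ = 1 → ζ - z ≠ 0 := by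
    intro ζ hζ h
    rw [sub_eq_zero] at h
    rw [← h, hζ] at hz
    exact lt_irrefl _ hz
  have hcont : ContinuousOn (fun ζ => (1 - ‖z‖ ^ 2) / ‖ζ - z‖ ^ 2)
      unitCircle := by
    apply ContinuousOn.div continuousOn_const
    · exact ((continuous_norm.comp (continuous_id.sub continuous_const)).pow 2).continuousOn
    · intro ζ hζ
      exact pow_ne_zero 2 (norm_ne_zero_iff.mpr (hne ζ hζ))
  rw [integral_mCircle _ (aestronglyMeasurable_mCircle hcont)]
  have hInt : IntegrableOn (fun θ : ℝ =>
      (Complex.exp (θ * Complex.I) + z) / (Complex.exp (θ * Complex.I) - z))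
      (Set.Ioc 0 (2 * π)) volume := by
    apply Continuous.integrableOn_Ioc
    apply Continuous.div
    · fun_prop
    · fun_prop
    · exact fun θ => hne _ (abs_circleExp θ)
  have hint : ∫ θ in Set.Ioc 0 (2 * π),
      (1 - ‖z‖ ^ 2) / ‖Complex.exp (θ * Complex.I) - z‖ ^ 2 = 2 * π := by
    have hX := complex_circle_integral hz
    rw [intervalIntegral.integral_of_le Real.two_pi_pos.le] at hX
    have hre := integral_re hInt
    rw [hX] at hre
    have hcongr : ∫ θ in Set.Ioc 0 (2 * π),
        (1 - ‖z‖ ^ 2) / ‖Complex.exp (θ * Complex.I) - z‖ ^ 2 =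
        ∫ θ in Set.Ioc 0 (2 * π), RCLike.re
          ((Complex.exp (θ * Complex.I) + z) / (Complex.exp (θ * Complex.I) - z)) := by
      apply integral_congr_ae
      filter_upwards with θ
      rw [RCLike.re_to_complex, re_quotient (abs_circleExp θ) hz]
    rw [hcongr, hre]
    simp
  rw [hint, smul_eq_mul, inv_mul_cancel₀ Real.two_pi_pos.ne']
def pKernel (w ζ : ℂ) : ℝ := (1 - ‖w‖ ^ 2) / ‖ζ - w‖ ^ 2

lemma pKernel_integral_one {w : ℂ} (hw : ‖w‖ < 1) :
    ∫ ζ, pKernel w ζ ∂mCircle = 1 := kernel_integral_one hw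

lemma abs_sub_lower {w ζ : ℂ} (hζ : ‖ζ‖ = 1) :
    1 - ‖w‖ ≤ ‖ζ - w‖ := by
  have := norm_sub_norm_le ζ w
  rw [hζ] at this
  exact this

lemma pKernel_nonneg {w ζ : ℂ} (hw : ‖w‖ ≤ 1) : 0 ≤ pKernel w ζ := by
  apply div_nonneg
  · nlinarith [norm_nonneg w]
  · positivity

lemma pKernel_le' {w ζ : ℂ} (hw : ‖w‖ < 1) (hζ : ‖ζ‖ = 1) :
    pKernel w ζ ≤ 1 / (1 - ‖w‖) ^ 2 := by
  have h1 : 0 < 1 - ‖w‖ := by linarith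
  have h2 := abs_sub_lower (w := w) hζ
  rw [pKernel]
  apply div_le_div₀ ?_ ?_ (by positivity) ?_
  · norm_num
  · nlinarith [norm_nonneg w]
  · nlinarith

lemma unitCircle_eq_sphere : unitCircle = Metric.sphere (0:ℂ) 1 := by
  ext ζ; simp [unitCircle, Complex.dist_eq]

lemma isCompact_unitCircle : IsCompact unitCircle := by
  rw [unitCircle_eq_sphere]; exact isCompact_sphere 0 1

lemma one_mem_unitCircle : (1:ℂ) ∈ unitCircle := by simp [unitCircle]

lemma ae_circle_of_null (μ : Measure ℂ) (hμ : μ unitCircleᶜ = 0) : ∀ᵐ ζ ∂μ, ζ ∈ unitCircle :=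
  ae_iff.2 hμ

lemma restrict_circle_eq_self (μ : Measure ℂ) (hμ : μ unitCircleᶜ = 0) :
    μ.restrict unitCircle = μ :=
  Measure.restrict_eq_self_of_ae_mem (ae_circle_of_null μ hμ)

lemma aesm_on_circle {E : Type*} [NormedAddCommGroup E] (μ : Measure ℂ)
    (hμ : μ unitCircleᶜ = 0) {f : ℂ → E} (hf : ContinuousOn f unitCircle) :
    AEStronglyMeasurable f μ := by
  rw [← restrict_circle_eq_self μ hμ]
  exact hf.aestronglyMeasurable measurableSet_unitCircle

lemma integrable_on_circle (μ : Measure ℂ) [IsFiniteMeasure μ]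
    (hμ : μ unitCircleᶜ = 0) {f : ℂ → ℝ} (hf : ContinuousOn f unitCircle)
    {C : ℝ} (hC : ∀ ζ ∈ unitCircle, |f ζ| ≤ C) : Integrable f μ := by
  refine ⟨aesm_on_circle μ hμ hf, HasFiniteIntegral.of_bounded (C := C) ?_⟩
  filter_upwards [ae_circle_of_null μ hμ] with ζ hζ
  simpa using hC ζ hζ

lemma abs_sub_symm_circle {ζ ξ : ℂ} (hζ : ‖ζ‖ = 1) (hξ : ‖ξ‖ = 1) (r : ℝ) :
    ‖ξ - r * ζ‖ = ‖ζ - r * ξ‖ := by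
  have hζ2 : ζ.re ^ 2 + ζ.im ^ 2 = 1 := by
    have h := Complex.sq_norm ζ
    rw [hζ] at h
    simpa [Complex.normSq_apply, sq] using h.symm
  have hξ2 : ξ.re ^ 2 + ξ.im ^ 2 = 1 := by
    have h := Complex.sq_norm ξ
    rw [hξ] at h
    simpa [Complex.normSq_apply, sq] using h.symm
  rw [Complex.norm_def, Complex.norm_def]
  congr 1
  simp only [Complex.normSq_apply, Complex.sub_re, Complex.sub_im, Complex.mul_re,
    Complex.mul_im, Complex.ofReal_re, Complex.ofReal_im]
  ring_nf
  nlinarith [hζ2, hξ2]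

lemma abs_smul_circle {ζ : ℂ} (hζ : ‖ζ‖ = 1) {r : ℝ} (hr : 0 ≤ r) :
    ‖(r:ℂ) * ζ‖ = r := by
  rw [norm_mul, hζ, Complex.norm_real, Real.norm_eq_abs, _root_.abs_of_nonneg hr, mul_one]

lemma pKernel_symm {ζ ξ : ℂ} (hζ : ζ ∈ unitCircle) (hξ : ξ ∈ unitCircle) {r : ℝ} (hr : 0 ≤ r) :
    pKernel ((r:ℂ) * ζ) ξ = pKernel ((r:ℂ) * ξ) ζ := by
  rw [pKernel, pKernel, abs_smul_circle hζ hr, abs_smul_circle hξ hr,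
    abs_sub_symm_circle hζ hξ r]
lemma continuousOn_pKernel_comp {X : Type*} [TopologicalSpace X] {w ζ : X → ℂ} {s : Set X}
    (hw : ContinuousOn w s) (hζ : ContinuousOn ζ s) (h : ∀ x ∈ s, ζ x - w x ≠ 0) :
    ContinuousOn (fun x => pKernel (w x) (ζ x)) s := by
  apply ContinuousOn.div
  · exact continuousOn_const.sub ((continuous_norm.comp_continuousOn hw).pow 2)
  · exact (continuous_norm.comp_continuousOn (hζ.sub hw)).pow 2
  · intro x hx
    exact pow_ne_zero _ (norm_ne_zero_iff.mpr (h x hx))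

lemma prod_ae_circle (μ ν : Measure ℂ) [IsFiniteMeasure μ] [IsFiniteMeasure ν]
    (hμ : μ unitCircleᶜ = 0) (hν : ν unitCircleᶜ = 0) :
    ∀ᵐ p ∂(μ.prod ν), p ∈ unitCircle ×ˢ unitCircle := by
  rw [ae_iff]
  have hsub : {p : ℂ × ℂ | ¬p ∈ unitCircle ×ˢ unitCircle} ⊆
      (unitCircleᶜ ×ˢ (Set.univ : Set ℂ)) ∪ ((Set.univ : Set ℂ) ×ˢ unitCircleᶜ) := by
    intro p hp
    simp only [Set.mem_setOf_eq, Set.mem_prod, not_and_or] at hp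
    rcases hp with h | h
    · exact Or.inl ⟨h, Set.mem_univ _⟩
    · exact Or.inr ⟨Set.mem_univ _, h⟩
  refine measure_mono_null hsub (measure_union_null ?_ ?_)
  · rw [Measure.prod_prod, hμ, zero_mul]
  · rw [Measure.prod_prod, hν, mul_zero]

lemma prod_restrict_circle (μ ν : Measure ℂ) [IsFiniteMeasure μ] [IsFiniteMeasure ν]
    (hμ : μ unitCircleᶜ = 0) (hν : ν unitCircleᶜ = 0) :
    (μ.prod ν).restrict (unitCircle ×ˢ unitCircle) = μ.prod ν :=
  Measure.restrict_eq_self_of_ae_mem (prod_ae_circle μ ν hμ hν)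

lemma integrable_prod_circle (μ ν : Measure ℂ) [IsFiniteMeasure μ] [IsFiniteMeasure ν]
    (hμ : μ unitCircleᶜ = 0) (hν : ν unitCircleᶜ = 0) {F : ℂ × ℂ → ℝ}
    (hF : ContinuousOn F (unitCircle ×ˢ unitCircle))
    {C : ℝ} (hC : ∀ p ∈ unitCircle ×ˢ unitCircle, |F p| ≤ C) :
    Integrable F (μ.prod ν) := by
  constructor
  · rw [← prod_restrict_circle μ ν hμ hν]
    exact hF.aestronglyMeasurable (measurableSet_unitCircle.prod measurableSet_unitCircle)
  · apply HasFiniteIntegral.of_bounded (C := C)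
    filter_upwards [prod_ae_circle μ ν hμ hν] with p hp
    simpa using hC p hp

lemma clark_mass {J : ℂ → ℂ} {α : ℂ} {σ : Measure ℂ} (hα : α ∈ unitCircle)
    [IsFiniteMeasure σ] (hc : σ unitCircleᶜ = 0)
    (hp : poissonIntegral σ 0 = (1 - ‖J 0‖ ^ 2) / ‖α - J 0‖ ^ 2)
    (ha0 : ‖J 0‖ < 1) :
    (σ Set.univ).toReal ≤ 1 / (1 - ‖J 0‖) ^ 2 := by
  have key : (σ Set.univ).toReal = poissonIntegral σ 0 := by
    rw [poissonIntegral]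
    rw [show (∫ ζ, (1 - ‖(0:ℂ)‖ ^ 2) / ‖ζ - 0‖ ^ 2 ∂σ)
        = ∫ ζ, (1:ℝ) ∂σ from integral_congr_ae ?_]
    · simp [Measure.real]
    · filter_upwards [ae_circle_of_null σ hc] with ζ hζ
      rw [sub_zero]
      simp [hζ, unitCircle] at hζ ⊢
      rw [hζ]
      norm_num
  rw [key, hp]
  exact pKernel_le' ha0 hα

lemma poissonIntegral_eq_pKernel (σ : Measure ℂ) (z : ℂ) :
    poissonIntegral σ z = ∫ ζ, pKernel z ζ ∂σ := rfl
lemma mem_disk_smul {ξ : ℂ} (hξ : ξ ∈ unitCircle) {r : ℝ} (hr0 : 0 ≤ r) (hr1 : r < 1) :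
    (r:ℂ) * ξ ∈ unitDisk := by
  rw [unitDisk, Set.mem_setOf_eq, abs_smul_circle hξ hr0]
  exact hr1

lemma fubini_step (g : ℂ → ℝ) {Mg : ℝ} (hMg : ∀ ζ ∈ unitCircle, |g ζ| ≤ Mg)
    (hgc : ContinuousOn g unitCircle)
    {r : ℝ} (hr0 : 0 ≤ r) (hr1 : r < 1)
    (σ : Measure ℂ) [IsFiniteMeasure σ] (hcirc : σ unitCircleᶜ = 0)
    {J : ℂ → ℂ} {α : ℂ}
    (hp : ∀ z ∈ unitDisk, poissonIntegral σ z =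
      (1 - ‖J z‖ ^ 2) / ‖α - J z‖ ^ 2) :
    Integrable (fun ζ => ∫ ξ, pKernel ((r:ℂ) * ζ) ξ * g ξ ∂mCircle) σ ∧
    ∫ ζ, (∫ ξ, pKernel ((r:ℂ) * ζ) ξ * g ξ ∂mCircle) ∂σ =
      ∫ ξ, g ξ * pKernel (J ((r:ℂ) * ξ)) α ∂mCircle := by
  have hrabs : ∀ ζ ∈ unitCircle, ‖(r:ℂ) * ζ‖ < 1 := by
    intro ζ hζ; rw [abs_smul_circle hζ hr0]; exact hr1
  have hne : ∀ p : ℂ × ℂ, p ∈ unitCircle ×ˢ unitCircle → p.2 - (r:ℂ) * p.1 ≠ 0 := by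
    rintro ⟨ζ, ξ⟩ ⟨hζ, hξ⟩ h
    rw [sub_eq_zero] at h
    have := hrabs ζ hζ
    rw [← h] at this
    rw [unitCircle, Set.mem_setOf_eq] at hξ
    rw [hξ] at this
    exact lt_irrefl _ this
  have hFcont : ContinuousOn (fun p : ℂ × ℂ => pKernel ((r:ℂ) * p.1) p.2 * g p.2)
      (unitCircle ×ˢ unitCircle) := by
    apply ContinuousOn.mul
    · exact continuousOn_pKernel_comp (continuousOn_const.mul continuousOn_fst)
        continuousOn_snd hne
    · exact hgc.comp continuousOn_snd (fun p hp => hp.2)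
  have hFbdd : ∀ p ∈ unitCircle ×ˢ unitCircle,
      |pKernel ((r:ℂ) * p.1) p.2 * g p.2| ≤ (1 / (1 - r) ^ 2) * Mg := by
    rintro ⟨ζ, ξ⟩ ⟨hζ, hξ⟩
    rw [abs_mul]
    have h1 : |pKernel ((r:ℂ) * ζ) ξ| ≤ 1 / (1 - r) ^ 2 := by
      rw [_root_.abs_of_nonneg (pKernel_nonneg (hrabs ζ hζ).le)]
      have := pKernel_le' (hrabs ζ hζ) hξ
      rwa [abs_smul_circle hζ hr0] at this
    have h2 : |g ξ| ≤ Mg := hMg ξ hξ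
    have h2' : (0:ℝ) ≤ |g ξ| := abs_nonneg _
    apply mul_le_mul h1 h2 h2' (by positivity)
  have hFint : Integrable (fun p : ℂ × ℂ => pKernel ((r:ℂ) * p.1) p.2 * g p.2)
      (σ.prod mCircle) :=
    integrable_prod_circle σ mCircle hcirc mCircle_compl_circle hFcont hFbdd
  constructor
  · exact hFint.integral_prod_left
  · rw [integral_integral_swap hFint]
    apply integral_congr_ae
    filter_upwards [mCircle_ae_circle] with ξ hξ
    rw [integral_mul_const]
    rw [mul_comm]
    congr 1
    have hsym : ∫ ζ, pKernel ((r:ℂ) * ζ) ξ ∂σ = ∫ ζ, pKernel ((r:ℂ) * ξ) ζ ∂σ := by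
      apply integral_congr_ae
      filter_upwards [ae_circle_of_null σ hcirc] with ζ hζ
      exact pKernel_symm hζ hξ hr0
    rw [hsym, ← poissonIntegral_eq_pKernel, hp _ (mem_disk_smul hξ hr0 hr1)]
    rfl

lemma exists_bound_lt_one {J : ℂ → ℂ} (hJc : ContinuousOn J unitDisk)
    (hJm : Set.MapsTo J unitDisk unitDisk) {r : ℝ} (hr0 : 0 ≤ r) (hr1 : r < 1) :
    ∃ c : ℝ, c < 1 ∧ ∀ ξ ∈ unitCircle, ‖J ((r:ℂ) * ξ)‖ ≤ c := by
  have hcont : ContinuousOn (fun ξ => ‖J ((r:ℂ) * ξ)‖) unitCircle := by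
    apply continuous_norm.comp_continuousOn
    apply hJc.comp (continuousOn_const.mul continuousOn_id)
    intro ξ hξ
    exact mem_disk_smul hξ hr0 hr1
  obtain ⟨ξ₀, hξ₀, hmax⟩ := isCompact_unitCircle.exists_isMaxOn ⟨1, one_mem_unitCircle⟩ hcont
  exact ⟨‖J ((r:ℂ) * ξ₀)‖, hJm (mem_disk_smul hξ₀ hr0 hr1), fun ξ hξ => hmax hξ⟩

lemma fubini_step2 (g : ℂ → ℝ) {Mg : ℝ} (hMg : ∀ ζ ∈ unitCircle, |g ζ| ≤ Mg)
    (hgc : ContinuousOn g unitCircle)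
    {r : ℝ} (hr0 : 0 ≤ r) (hr1 : r < 1)
    {J : ℂ → ℂ} (hJc : ContinuousOn J unitDisk) (hJm : Set.MapsTo J unitDisk unitDisk) :
    ∫ α, (∫ ξ, g ξ * pKernel (J ((r:ℂ) * ξ)) α ∂mCircle) ∂mCircle = ∫ ξ, g ξ ∂mCircle := by
  obtain ⟨c, hc1, hc⟩ := exists_bound_lt_one hJc hJm hr0 hr1
  have hc0 : ∀ ξ ∈ unitCircle, (0:ℝ) ≤ ‖J ((r:ℂ) * ξ)‖ :=
    fun ξ _ => norm_nonneg _
  have hne : ∀ p : ℂ × ℂ, p ∈ unitCircle ×ˢ unitCircle → p.1 - J ((r:ℂ) * p.2) ≠ 0 := by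
    rintro ⟨α, ξ⟩ ⟨hα, hξ⟩ h
    rw [sub_eq_zero] at h
    have h2 : ‖J ((r:ℂ) * ξ)‖ ≤ c := hc ξ hξ
    rw [← h] at h2
    rw [unitCircle, Set.mem_setOf_eq] at hα
    rw [hα] at h2
    linarith
  have habsJ : ∀ ξ ∈ unitCircle, ‖J ((r:ℂ) * ξ)‖ < 1 :=
    fun ξ hξ => lt_of_le_of_lt (hc ξ hξ) hc1
  have hcmax : c < 1 := hc1
  have hcnn : (0:ℝ) ≤ c := le_trans (hc0 1 one_mem_unitCircle) (hc 1 one_mem_unitCircle)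
  have hGcont : ContinuousOn (fun p : ℂ × ℂ => g p.2 * pKernel (J ((r:ℂ) * p.2)) p.1)
      (unitCircle ×ˢ unitCircle) := by
    apply ContinuousOn.mul
    · exact hgc.comp continuousOn_snd (fun p hp => hp.2)
    · apply continuousOn_pKernel_comp ?_ continuousOn_fst hne
      apply hJc.comp (continuousOn_const.mul continuousOn_snd)
      rintro ⟨α, ξ⟩ ⟨hα, hξ⟩
      exact mem_disk_smul hξ hr0 hr1
  have hGbdd : ∀ p ∈ unitCircle ×ˢ unitCircle,
      |g p.2 * pKernel (J ((r:ℂ) * p.2)) p.1| ≤ Mg * (1 / (1 - c) ^ 2) := by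
    rintro ⟨α, ξ⟩ ⟨hα, hξ⟩
    rw [abs_mul]
    have h1 : |pKernel (J ((r:ℂ) * ξ)) α| ≤ 1 / (1 - c) ^ 2 := by
      rw [_root_.abs_of_nonneg (pKernel_nonneg (habsJ ξ hξ).le)]
      calc pKernel (J ((r:ℂ) * ξ)) α ≤ 1 / (1 - ‖J ((r:ℂ) * ξ)‖) ^ 2 :=
            pKernel_le' (habsJ ξ hξ) hα
        _ ≤ 1 / (1 - c) ^ 2 := by
            have hle := hc ξ hξ
            have hpos : (0:ℝ) < 1 - c := by linarith
            apply one_div_le_one_div_of_le (by positivity)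
            exact pow_le_pow_left₀ hpos.le (by linarith) 2
    exact mul_le_mul (hMg ξ hξ) h1 (abs_nonneg _) (le_trans (abs_nonneg _) (hMg 1 one_mem_unitCircle))
  have hGint : Integrable (fun p : ℂ × ℂ => g p.2 * pKernel (J ((r:ℂ) * p.2)) p.1)
      (mCircle.prod mCircle) :=
    integrable_prod_circle mCircle mCircle mCircle_compl_circle mCircle_compl_circle hGcont hGbdd
  rw [integral_integral_swap hGint]
  apply integral_congr_ae
  filter_upwards [mCircle_ae_circle] with ξ hξ
  rw [integral_const_mul, pKernel_integral_one (habsJ ξ hξ), mul_one]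
set_option maxHeartbeats 1000000 in
lemma uniform_approx (g : ℂ → ℝ) (hg : Continuous g) {Mg : ℝ}
    (hMg : ∀ ζ ∈ unitCircle, |g ζ| ≤ Mg) :
    ∀ ε : ℝ, 0 < ε → ∃ r : ℝ, 0 ≤ r ∧ r < 1 ∧ ∀ ζ ∈ unitCircle,
      |(∫ ξ, pKernel ((r:ℂ) * ζ) ξ * g ξ ∂mCircle) - g ζ| ≤ ε := by
  intro ε hε
  have hMg0 : 0 ≤ Mg := le_trans (abs_nonneg _) (hMg 1 one_mem_unitCircle)
  have hUC : UniformContinuousOn g unitCircle :=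
    isCompact_unitCircle.uniformContinuousOn_of_continuous hg.continuousOn
  rw [Metric.uniformContinuousOn_iff] at hUC
  obtain ⟨δ, hδ, hδ'⟩ := hUC (ε/2) (by positivity)
  set η : ℝ := min (δ/2) (ε * δ^2 / (32 * Mg + 32)) with hη_def
  have hηpos : 0 < η := by
    apply lt_min (by positivity)
    positivity
  set r : ℝ := max 0 (1 - η) with hr_def
  have hr0 : 0 ≤ r := le_max_left _ _
  have hr1 : r < 1 := by
    apply max_lt one_pos
    linarith
  have h1r : 1 - r ≤ η := by
    have : 1 - η ≤ r := le_max_right _ _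
    linarith
  refine ⟨r, hr0, hr1, ?_⟩
  intro ζ hζ
  have hrζ : ‖(r:ℂ) * ζ‖ < 1 := by
    rw [abs_smul_circle hζ hr0]; exact hr1
  have hrζ' : ‖(r:ℂ) * ζ‖ = r := abs_smul_circle hζ hr0
  set A : ℝ := 8 * Mg * (1 - r^2) / δ^2 with hA_def
  have hA0 : 0 ≤ A := by
    have : (0:ℝ) ≤ 1 - r^2 := by nlinarith
    positivity
  have hKcont : ContinuousOn (fun ξ => pKernel ((r:ℂ) * ζ) ξ) unitCircle := by
    apply continuousOn_pKernel_comp continuousOn_const continuousOn_id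
    intro ξ hξ h
    rw [sub_eq_zero] at h
    simp only [id_eq] at h
    rw [unitCircle, Set.mem_setOf_eq] at hξ
    rw [h, hrζ'] at hξ
    exact absurd hξ hr1.ne
  have hKbd : ∀ ξ ∈ unitCircle, |pKernel ((r:ℂ) * ζ) ξ| ≤ 1 / (1-r)^2 := by
    intro ξ hξ
    rw [_root_.abs_of_nonneg (pKernel_nonneg hrζ.le)]
    have := pKernel_le' hrζ hξ
    rwa [hrζ'] at this
  have hKint : Integrable (fun ξ => pKernel ((r:ℂ) * ζ) ξ) mCircle :=
    integrable_on_circle mCircle mCircle_compl_circle hKcont hKbd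
  have hKgint : Integrable (fun ξ => pKernel ((r:ℂ) * ζ) ξ * g ξ) mCircle := by
    apply integrable_on_circle mCircle mCircle_compl_circle
      (hKcont.mul (hg.continuousOn)) (C := (1/(1-r)^2) * Mg)
    intro ξ hξ
    rw [Pi.mul_apply, abs_mul]
    exact mul_le_mul (hKbd ξ hξ) (hMg ξ hξ) (abs_nonneg _) (by positivity)
  have hone : ∫ ξ, pKernel ((r:ℂ) * ζ) ξ ∂mCircle = 1 := pKernel_integral_one hrζ
  have hgζ : g ζ = ∫ ξ, pKernel ((r:ℂ) * ζ) ξ * g ζ ∂mCircle := by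
    rw [integral_mul_const, hone, one_mul]
  have hdiff : (∫ ξ, pKernel ((r:ℂ) * ζ) ξ * g ξ ∂mCircle) - g ζ =
      ∫ ξ, pKernel ((r:ℂ) * ζ) ξ * (g ξ - g ζ) ∂mCircle := by
    conv_lhs => rw [hgζ]
    rw [← integral_sub hKgint (hKint.mul_const (g ζ))]
    congr 1; ext ξ; ring
  rw [hdiff]
  have hBint : Integrable (fun ξ => (ε/2) * pKernel ((r:ℂ) * ζ) ξ + A) mCircle :=
    (hKint.const_mul (ε/2)).add (integrable_const A)
  have hbd : ∀ᵐ ξ ∂mCircle, ‖pKernel ((r:ℂ) * ζ) ξ * (g ξ - g ζ)‖ ≤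
      (ε/2) * pKernel ((r:ℂ) * ζ) ξ + A := by
    filter_upwards [mCircle_ae_circle] with ξ hξ
    have hKnn : 0 ≤ pKernel ((r:ℂ) * ζ) ξ := pKernel_nonneg hrζ.le
    rw [Real.norm_eq_abs, abs_mul, _root_.abs_of_nonneg hKnn]
    by_cases hcase : dist ξ ζ < δ
    · have h1 : |g ξ - g ζ| ≤ ε/2 := by
        have := hδ' ξ hξ ζ hζ hcase
        rw [Real.dist_eq] at this
        linarith
      nlinarith [mul_le_mul_of_nonneg_left h1 hKnn]
    · push_neg at hcase
      rw [Complex.dist_eq] at hcase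
      have hfar : δ/2 ≤ ‖ξ - (r:ℂ) * ζ‖ := by
        have hζ1 : ‖ζ‖ = 1 := hζ
        have h1 := norm_sub_le_norm_sub_add_norm_sub ξ ((r:ℂ) * ζ) ζ
        have h2 : ‖(r:ℂ) * ζ - ζ‖ = 1 - r := by
          have he : (r:ℂ) * ζ - ζ = ((r - 1 : ℝ) : ℂ) * ζ := by push_cast; ring
          rw [he, norm_mul, Complex.norm_real, Real.norm_eq_abs, hζ1, mul_one,
            _root_.abs_of_nonpos (by linarith)]
          ring
        have h3 : η ≤ δ/2 := min_le_left _ _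
        rw [h2] at h1
        linarith
      have hKle : pKernel ((r:ℂ) * ζ) ξ ≤ 4 * (1 - r^2) / δ^2 := by
        rw [pKernel, hrζ']
        have hnum : (0:ℝ) ≤ 1 - r^2 := by nlinarith
        have hden : δ^2/4 ≤ ‖ξ - (r:ℂ) * ζ‖^2 := by
          nlinarith [hfar, norm_nonneg (ξ - (r:ℂ) * ζ)]
        calc (1 - r^2) / ‖ξ - (r:ℂ) * ζ‖^2 ≤ (1 - r^2) / (δ^2/4) := by
              apply div_le_div_of_nonneg_left hnum (by nlinarith [mul_pos hδ hδ]) hden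
          _ = 4 * (1 - r^2) / δ^2 := by field_simp
      have hgbd : |g ξ - g ζ| ≤ 2 * Mg := by
        calc |g ξ - g ζ| ≤ |g ξ| + |g ζ| := abs_sub _ _
          _ ≤ 2 * Mg := by have := hMg ξ hξ; have := hMg ζ hζ; linarith
      have : pKernel ((r:ℂ) * ζ) ξ * |g ξ - g ζ| ≤ A := by
        rw [hA_def]
        calc pKernel ((r:ℂ) * ζ) ξ * |g ξ - g ζ| ≤ (4 * (1 - r^2) / δ^2) * (2 * Mg) := by
              apply mul_le_mul hKle hgbd (abs_nonneg _)
                (div_nonneg (by nlinarith) (by positivity))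
          _ = 8 * Mg * (1 - r^2) / δ^2 := by ring
      nlinarith [mul_nonneg (le_of_lt (half_pos hε)) hKnn]
  have hest := norm_integral_le_of_norm_le hBint hbd
  rw [Real.norm_eq_abs] at hest
  have hBval : ∫ ξ, ((ε/2) * pKernel ((r:ℂ) * ζ) ξ + A) ∂mCircle = ε/2 + A := by
    rw [integral_add (hKint.const_mul (ε/2)) (integrable_const A),
      integral_const_mul, hone, integral_const]
    simp
  have hAle : A ≤ ε/2 := by
    have h1 : 1 - r^2 ≤ 2 * η := by nlinarith [h1r, hr0, hr1.le]
    have h2 : η ≤ ε * δ^2 / (32 * Mg + 32) := min_le_right _ _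
    have h3 : η * (32 * Mg + 32) ≤ ε * δ^2 := by
      rw [← le_div_iff₀ (by positivity)]
      exact h2
    rw [hA_def, div_le_iff₀ (by positivity)]
    nlinarith [mul_le_mul_of_nonneg_left h1 hMg0, h3, mul_nonneg hMg0 hηpos.le, hηpos.le]
  rw [hBval] at hest
  linarith
lemma G_continuousOn (g : ℂ → ℝ) {Mg : ℝ} (hMg : ∀ ζ ∈ unitCircle, |g ζ| ≤ Mg)
    (hgc : ContinuousOn g unitCircle) {r : ℝ} (hr0 : 0 ≤ r) (hr1 : r < 1)
    {J : ℂ → ℂ} (hJc : ContinuousOn J unitDisk) (hJm : Set.MapsTo J unitDisk unitDisk) :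
    ContinuousOn (fun α => ∫ ξ, g ξ * pKernel (J ((r:ℂ) * ξ)) α ∂mCircle) unitCircle := by
  obtain ⟨c, hc1, hc⟩ := exists_bound_lt_one hJc hJm hr0 hr1
  have habsJ : ∀ ξ ∈ unitCircle, ‖J ((r:ℂ) * ξ)‖ < 1 :=
    fun ξ hξ => lt_of_le_of_lt (hc ξ hξ) hc1
  have hne : ∀ α ∈ unitCircle, ∀ ξ ∈ unitCircle, α - J ((r:ℂ) * ξ) ≠ 0 := by
    intro α hα ξ hξ h
    rw [sub_eq_zero] at h
    have h2 := habsJ ξ hξ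
    rw [← h] at h2
    have hα1 : ‖α‖ = 1 := hα
    rw [hα1] at h2
    exact lt_irrefl _ h2
  apply continuousOn_of_dominated (bound := fun ξ => Mg * (1 / (1 - c) ^ 2))
  · intro α hα
    apply aesm_on_circle mCircle mCircle_compl_circle
    apply ContinuousOn.mul hgc
    apply continuousOn_pKernel_comp ?_ continuousOn_const
      (fun ξ hξ => hne α hα ξ hξ)
    exact hJc.comp (continuousOn_const.mul continuousOn_id)
      (fun ξ hξ => mem_disk_smul hξ hr0 hr1)
  · intro α hα
    filter_upwards [mCircle_ae_circle] with ξ hξ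
    rw [Real.norm_eq_abs, abs_mul]
    have hcnn : (0:ℝ) ≤ c := le_trans (norm_nonneg _) (hc 1 one_mem_unitCircle)
    have h1 : |pKernel (J ((r:ℂ) * ξ)) α| ≤ 1 / (1 - c) ^ 2 := by
      rw [_root_.abs_of_nonneg (pKernel_nonneg (habsJ ξ hξ).le)]
      calc pKernel (J ((r:ℂ) * ξ)) α ≤ 1 / (1 - ‖J ((r:ℂ) * ξ)‖) ^ 2 :=
            pKernel_le' (habsJ ξ hξ) hα
        _ ≤ 1 / (1 - c) ^ 2 := by
            have hle := hc ξ hξ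
            have hpos : (0:ℝ) < 1 - c := by linarith
            apply one_div_le_one_div_of_le (by positivity)
            exact pow_le_pow_left₀ hpos.le (by linarith) 2
    exact mul_le_mul (hMg ξ hξ) h1 (abs_nonneg _)
      (le_trans (abs_nonneg _) (hMg 1 one_mem_unitCircle))
  · exact integrable_const _
  · filter_upwards [mCircle_ae_circle] with ξ hξ
    apply ContinuousOn.mul continuousOn_const
    exact continuousOn_pKernel_comp continuousOn_const continuousOn_id
      (fun α hα => by simpa using hne α hα ξ hξ)

lemma G_bound (g : ℂ → ℝ) {Mg : ℝ} (hMg : ∀ ζ ∈ unitCircle, |g ζ| ≤ Mg)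
    (hgc : ContinuousOn g unitCircle) {r : ℝ} (hr0 : 0 ≤ r) (hr1 : r < 1)
    {J : ℂ → ℂ} (hJc : ContinuousOn J unitDisk) (hJm : Set.MapsTo J unitDisk unitDisk) :
    ∃ C : ℝ, ∀ α ∈ unitCircle, |∫ ξ, g ξ * pKernel (J ((r:ℂ) * ξ)) α ∂mCircle| ≤ C := by
  obtain ⟨c, hc1, hc⟩ := exists_bound_lt_one hJc hJm hr0 hr1
  have hcnn : (0:ℝ) ≤ c := le_trans (norm_nonneg _) (hc 1 one_mem_unitCircle)
  have habsJ : ∀ ξ ∈ unitCircle, ‖J ((r:ℂ) * ξ)‖ < 1 :=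
    fun ξ hξ => lt_of_le_of_lt (hc ξ hξ) hc1
  refine ⟨Mg * (1 / (1 - c) ^ 2), fun α hα => ?_⟩
  rw [← Real.norm_eq_abs]
  refine le_trans (norm_integral_le_of_norm_le
    (integrable_const (Mg * (1 / (1 - c) ^ 2))) ?_) (by simp)
  filter_upwards [mCircle_ae_circle] with ξ hξ
  rw [Real.norm_eq_abs, abs_mul]
  have h1 : |pKernel (J ((r:ℂ) * ξ)) α| ≤ 1 / (1 - c) ^ 2 := by
    rw [_root_.abs_of_nonneg (pKernel_nonneg (habsJ ξ hξ).le)]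
    calc pKernel (J ((r:ℂ) * ξ)) α ≤ 1 / (1 - ‖J ((r:ℂ) * ξ)‖) ^ 2 :=
          pKernel_le' (habsJ ξ hξ) hα
      _ ≤ 1 / (1 - c) ^ 2 := by
          have hle := hc ξ hξ
          have hpos : (0:ℝ) < 1 - c := by linarith
          apply one_div_le_one_div_of_le (by positivity)
          exact pow_le_pow_left₀ hpos.le (by linarith) 2
  exact mul_le_mul (hMg ξ hξ) h1 (abs_nonneg _)
    (le_trans (abs_nonneg _) (hMg 1 one_mem_unitCircle))

/-- Aleksandrov disintegration of Lebesgue measure by Clark measures. -/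
theorem aleksandrov_disintegration (I Ib : ℂ → ℂ) (hI : IsInner I Ib)
    (σ : ℂ → Measure ℂ) (hσ : ∀ α ∈ unitCircle, IsClarkMeasure I α (σ α)) :
    ∀ g : ℂ → ℝ, Continuous g →
      ∫ α, (∫ ζ, g ζ ∂(σ α)) ∂mCircle = ∫ ζ, g ζ ∂mCircle := by
  intro g hg
  have hIc : ContinuousOn I unitDisk := hI.1.continuousOn
  have hIm : Set.MapsTo I unitDisk unitDisk := hI.2.1
  obtain ⟨Mg₀, hMg₀⟩ := isCompact_unitCircle.exists_bound_of_continuousOn hg.continuousOn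
  set Mg : ℝ := max Mg₀ 0 with hMg_def
  have hMg : ∀ ζ ∈ unitCircle, |g ζ| ≤ Mg := by
    intro ζ hζ
    calc |g ζ| = ‖g ζ‖ := (Real.norm_eq_abs _).symm
      _ ≤ Mg₀ := hMg₀ ζ hζ
      _ ≤ Mg := le_max_left _ _
  have hMgnn : 0 ≤ Mg := le_max_right _ _
  have h0disk : (0:ℂ) ∈ unitDisk := by simp [unitDisk]
  have haI0 : ‖I 0‖ < 1 := hIm h0disk
  set C₀ : ℝ := 1 / (1 - ‖I 0‖) ^ 2 with hC₀_def
  have hC₀nn : 0 ≤ C₀ := by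
    have h1 : (0:ℝ) < 1 - ‖I 0‖ := by linarith
    positivity
  have hmass : ∀ α ∈ unitCircle, ((σ α) Set.univ).toReal ≤ C₀ := by
    intro α hα
    haveI := (hσ α hα).1
    exact clark_mass hα (hσ α hα).2.1 ((hσ α hα).2.2 0 h0disk) haI0
  have hex : ∀ n : ℕ, ∃ r : ℝ, 0 ≤ r ∧ r < 1 ∧ ∀ ζ ∈ unitCircle,
      |(∫ ξ, pKernel ((r:ℂ) * ζ) ξ * g ξ ∂mCircle) - g ζ| ≤ 1/((n:ℝ)+1) :=
    fun n => uniform_approx g hg hMg (1/((n:ℝ)+1)) (by positivity)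
  choose r hr0 hr1 hrapp using hex
  set G : ℕ → ℂ → ℝ := fun n α => ∫ ξ, g ξ * pKernel (I ((r n : ℂ) * ξ)) α ∂mCircle
    with hG_def
  set Φ : ℂ → ℝ := fun α => ∫ ζ, g ζ ∂(σ α) with hΦ_def
  have hkey : ∀ n : ℕ, ∀ α ∈ unitCircle, |Φ α - G n α| ≤ C₀ * (1/((n:ℝ)+1)) := by
    intro n α hα
    haveI := (hσ α hα).1
    obtain ⟨hint_u, heq⟩ := fubini_step g hMg hg.continuousOn (hr0 n) (hr1 n) (σ α)
      (hσ α hα).2.1 ((hσ α hα).2.2)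
    have hgint : Integrable g (σ α) :=
      integrable_on_circle (σ α) (hσ α hα).2.1 hg.continuousOn hMg
    have hΦG : Φ α - G n α =
        ∫ ζ, (g ζ - (∫ ξ, pKernel ((r n : ℂ) * ζ) ξ * g ξ ∂mCircle)) ∂(σ α) := by
      rw [hΦ_def, hG_def]
      simp only []
      rw [← heq, ← integral_sub hgint hint_u]
    rw [hΦG, ← Real.norm_eq_abs]
    have hbd : ∀ᵐ ζ ∂(σ α),
        ‖g ζ - (∫ ξ, pKernel ((r n : ℂ) * ζ) ξ * g ξ ∂mCircle)‖ ≤ 1/(n+1) := by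
      filter_upwards [ae_circle_of_null (σ α) (hσ α hα).2.1] with ζ hζ
      rw [Real.norm_eq_abs, abs_sub_comm]
      exact hrapp n ζ hζ
    refine le_trans (norm_integral_le_of_norm_le (integrable_const (1/((n:ℝ)+1))) hbd) ?_
    rw [integral_const, smul_eq_mul]
    apply mul_le_mul_of_nonneg_right (hmass α hα) (by positivity)
  have hGaesm : ∀ n, AEStronglyMeasurable (G n) mCircle := fun n =>
    aesm_on_circle mCircle mCircle_compl_circle
      (G_continuousOn g hMg hg.continuousOn (hr0 n) (hr1 n) hIc hIm)
  have hGint : ∀ n, Integrable (G n) mCircle := by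
    intro n
    obtain ⟨C, hC⟩ := G_bound g hMg hg.continuousOn (hr0 n) (hr1 n) hIc hIm
    refine ⟨hGaesm n, HasFiniteIntegral.of_bounded (C := C) ?_⟩
    filter_upwards [mCircle_ae_circle] with α hα
    simpa using hC α hα
  have htend0 : Tendsto (fun n : ℕ => C₀ * (1/(n+1:ℝ))) atTop (nhds 0) := by
    rw [show (0:ℝ) = C₀ * 0 by ring]
    exact tendsto_const_nhds.mul tendsto_one_div_add_atTop_nhds_zero_nat
  have hΦaesm : AEStronglyMeasurable Φ mCircle := by
    apply aestronglyMeasurable_of_tendsto_ae atTop hGaesm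
    filter_upwards [mCircle_ae_circle] with α hα
    rw [tendsto_iff_dist_tendsto_zero]
    apply squeeze_zero (fun n => dist_nonneg) (fun n => ?_) htend0
    rw [Real.dist_eq, abs_sub_comm]
    exact hkey n α hα
  have hΦint : Integrable Φ mCircle := by
    refine ⟨hΦaesm, HasFiniteIntegral.of_bounded (C := Mg * C₀) ?_⟩
    filter_upwards [mCircle_ae_circle] with α hα
    haveI := (hσ α hα).1
    have h1 : ‖∫ ζ, g ζ ∂(σ α)‖ ≤ ∫ _, Mg ∂(σ α) := by
      apply norm_integral_le_of_norm_le (integrable_const Mg)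
      filter_upwards [ae_circle_of_null (σ α) (hσ α hα).2.1] with ζ hζ
      rw [Real.norm_eq_abs]
      exact hMg ζ hζ
    rw [integral_const, smul_eq_mul] at h1
    have h2 : ((σ α) Set.univ).toReal * Mg ≤ C₀ * Mg :=
      mul_le_mul_of_nonneg_right (hmass α hα) hMgnn
    calc ‖Φ α‖ ≤ ((σ α) Set.univ).toReal * Mg := h1
      _ ≤ C₀ * Mg := h2
      _ = Mg * C₀ := by ring
  have hfinal : ∀ n : ℕ, |(∫ α, Φ α ∂mCircle) - ∫ ζ, g ζ ∂mCircle| ≤ C₀ * (1/((n:ℝ)+1)) := by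
    intro n
    have hG_eq : ∫ α, G n α ∂mCircle = ∫ ξ, g ξ ∂mCircle :=
      fubini_step2 g hMg hg.continuousOn (hr0 n) (hr1 n) hIc hIm
    rw [← hG_eq, ← integral_sub hΦint (hGint n), ← Real.norm_eq_abs]
    refine le_trans (norm_integral_le_of_norm_le
      (integrable_const (C₀ * (1/((n:ℝ)+1)))) ?_) (by simp)
    filter_upwards [mCircle_ae_circle] with α hα
    rw [Real.norm_eq_abs]
    exact hkey n α hα
  have hle0 : |(∫ α, Φ α ∂mCircle) - ∫ ζ, g ζ ∂mCircle| ≤ 0 :=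
    ge_of_tendsto htend0 (Filter.Eventually.of_forall hfinal)
  have heq0 : (∫ α, Φ α ∂mCircle) - ∫ ζ, g ζ ∂mCircle = 0 :=
    abs_eq_zero.mp (le_antisymm hle0 (abs_nonneg _))
  exact sub_eq_zero.mp heq0
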